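/- (Proposition 6, edge-level form) Under the two-stage cluster design with cluster in-experiment probability p and treatment probability π, the expectation of the Horvitz–Thompson estimator built from Y satisfies E[τ̂¹_c(p,π)] = (1/n) Σ_{i ≠ j} (γ_{i,j} + κ_{i,j} ζ_{i,j}), where κ_{i,j} = π if units i and j belong to the same cluster and κ_{i,j} = pπ otherwise. -/

import Mathlib

open Finset

noncomputable section

/-- Real-valued indicator of a Boolean. -/
def ind (b : Bool) : ℝ := if b then 1 else 0

/-- Dyadic linear potential-outcome model for an ordered pair `(i, j)`:
`z_{i,j}(W) = α_{i,j} + β_{i,j} W_i + γ_{i,j} W_j + ζ_{i,j} W_i W_j`. -/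
def zDyad {n : ℕ} (α β γ ζ : Fin n → Fin n → ℝ) (W : Fin n → ℝ) (i j : Fin n) : ℝ :=
  α i j + β i j * W i + γ i j * W j + ζ i j * W i * W j

/-- Upstream-aggregated outcome `Y_j(W) = Σ_{i ≠ j} z_{i,j}(W)`. -/
def Yagg {n : ℕ} (α β γ ζ : Fin n → Fin n → ℝ) (W : Fin n → ℝ) (j : Fin n) : ℝ :=
  ∑ i ∈ ({j}ᶜ : Finset (Fin n)), zDyad α β γ ζ W i j

/-- Downstream-aggregated outcome (diffusion metric) `D_j(W) = Σ_{i ≠ j} z_{j,i}(W)`. -/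
def Dagg {n : ℕ} (α β γ ζ : Fin n → Fin n → ℝ) (W : Fin n → ℝ) (j : Fin n) : ℝ :=
  ∑ i ∈ ({j}ᶜ : Finset (Fin n)), zDyad α β γ ζ W j i

/-- Expectation over the two-stage cluster design: `b ∈ {0,1}^C` are i.i.d.
Bernoulli(`p`) cluster in-experiment indicators and `u ∈ {0,1}^n` are i.i.d.
Bernoulli(`q`) treatment coins, all mutually independent. -/
def expectBU (n : ℕ) {C : Type} [Fintype C] [DecidableEq C] (p q : ℝ)
    (f : (C → Bool) → (Fin n → Bool) → ℝ) : ℝ :=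
  ∑ b : C → Bool, ∑ u : Fin n → Bool,
    (∏ k, if b k then p else 1 - p) * (∏ i, if u i then q else 1 - q) * f b u

/-- Realized treatment in the two-stage cluster design: `V_i = B_{c(i)}`,
`W_i = V_i U_i` (units outside the experiment receive control). -/
def treatBU {n : ℕ} {C : Type} (c : Fin n → C) (b : C → Bool) (u : Fin n → Bool) :
    Fin n → ℝ :=
  fun i => ind (b (c i) && u i)

/-- Horvitz–Thompson estimator built from `Y` in the two-stage cluster design:
`τ̂¹_c(p,q)(b,u) = (1/n) Σ_i [V_i W_i Y_i(W)/(pq) − V_i (1 − W_i) Y_i(W)/(p(1 − q))]`. -/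
def tauHat1Clu {n : ℕ} {C : Type} (α β γ ζ : Fin n → Fin n → ℝ) (c : Fin n → C)
    (p q : ℝ) (b : C → Bool) (u : Fin n → Bool) : ℝ :=
  (1 / (n : ℝ)) * ∑ i,
    (ind (b (c i)) * treatBU c b u i * Yagg α β γ ζ (treatBU c b u) i / (p * q) -
      ind (b (c i)) * (1 - treatBU c b u i) * Yagg α β γ ζ (treatBU c b u) i /
        (p * (1 - q)))

/-- Horvitz–Thompson estimator built from `D` in the two-stage cluster design. -/
def tauHat2Clu {n : ℕ} {C : Type} (α β γ ζ : Fin n → Fin n → ℝ) (c : Fin n → C)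
    (p q : ℝ) (b : C → Bool) (u : Fin n → Bool) : ℝ :=
  (1 / (n : ℝ)) * ∑ i,
    (ind (b (c i)) * treatBU c b u i * Dagg α β γ ζ (treatBU c b u) i / (p * q) -
      ind (b (c i)) * (1 - treatBU c b u i) * Dagg α β γ ζ (treatBU c b u) i /
        (p * (1 - q)))

/-! ### Auxiliary lemmas -/

/-- Bernoulli weight. -/
def wB (r : ℝ) : Bool → ℝ := fun t => if t then r else 1 - r

/-- Kronecker delta on booleans, real-valued. -/
def δb (a s : Bool) : ℝ := if a = s then 1 else 0

lemma ind_and (x y : Bool) : ind (x && y) = ind x * ind y := by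
  cases x <;> cases y <;> simp [ind]

lemma core2 {ι : Type*} [Fintype ι] [DecidableEq ι] (r : ℝ) (i₀ j₀ : ι)
    (h : i₀ ≠ j₀) (s t : Bool) :
    ∑ x : ι → Bool, (∏ k, wB r (x k)) * (δb (x i₀) s * δb (x j₀) t)
      = wB r s * wB r t := by
  have key : ∀ x : ι → Bool,
      (∏ k, wB r (x k)) * (δb (x i₀) s * δb (x j₀) t)
        = ∏ k, (wB r (x k) *
            ((if k = i₀ then δb (x k) s else 1) * (if k = j₀ then δb (x k) t else 1))) := by
    intro x
    rw [Finset.prod_mul_distrib, Finset.prod_mul_distrib,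
      Finset.prod_ite_eq' univ i₀ (fun k => δb (x k) s),
      Finset.prod_ite_eq' univ j₀ (fun k => δb (x k) t)]
    simp
  simp_rw [key]
  rw [← Fintype.prod_sum (fun k v => wB r v *
      ((if k = i₀ then δb v s else 1) * (if k = j₀ then δb v t else 1)))]
  have factor : ∀ k, (∑ v : Bool, wB r v *
      ((if k = i₀ then δb v s else 1) * (if k = j₀ then δb v t else 1)))
      = (if k = i₀ then wB r s else 1) * (if k = j₀ then wB r t else 1) := by
    intro k
    by_cases h₀ : k = i₀ <;> by_cases h₁ : k = j₀
    · exact absurd (h₀ ▸ h₁) h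
    · cases s <;> simp [h₀, h₁, δb, wB, h]
    · cases t <;> simp [h₀, h₁, δb, wB, Ne.symm h]
    · simp [h₀, h₁, wB]
  rw [Finset.prod_congr rfl (fun k _ => factor k), Finset.prod_mul_distrib,
    Finset.prod_ite_eq' univ i₀ (fun _ => wB r s),
    Finset.prod_ite_eq' univ j₀ (fun _ => wB r t)]
  simp

lemma core1 {ι : Type*} [Fintype ι] [DecidableEq ι] (r : ℝ) (i₀ : ι) (s : Bool) :
    ∑ x : ι → Bool, (∏ k, wB r (x k)) * δb (x i₀) s = wB r s := by
  have key : ∀ x : ι → Bool,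
      (∏ k, wB r (x k)) * δb (x i₀) s
        = ∏ k, (wB r (x k) * (if k = i₀ then δb (x k) s else 1)) := by
    intro x
    rw [Finset.prod_mul_distrib, Finset.prod_ite_eq' univ i₀ (fun k => δb (x k) s)]
    simp
  simp_rw [key]
  rw [← Fintype.prod_sum (fun k v => wB r v * (if k = i₀ then δb v s else 1))]
  have factor : ∀ k, (∑ v : Bool, wB r v * (if k = i₀ then δb v s else 1))
      = (if k = i₀ then wB r s else 1) := by
    intro k
    by_cases h₀ : k = i₀
    · cases s <;> simp [h₀, δb, wB]
    · simp [h₀, wB]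
  rw [Finset.prod_congr rfl (fun k _ => factor k),
    Finset.prod_ite_eq' univ i₀ (fun _ => wB r s)]
  simp

lemma sum_pi_two {ι : Type*} [Fintype ι] [DecidableEq ι] (r : ℝ) (i₀ j₀ : ι)
    (h : i₀ ≠ j₀) (H : Bool → Bool → ℝ) :
    ∑ x : ι → Bool, (∏ k, wB r (x k)) * H (x i₀) (x j₀)
      = ∑ s : Bool, ∑ t : Bool, wB r s * wB r t * H s t := by
  have decomp : ∀ x : ι → Bool, (∏ k, wB r (x k)) * H (x i₀) (x j₀)
      = ∑ s : Bool, ∑ t : Bool,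
          ((∏ k, wB r (x k)) * (δb (x i₀) s * δb (x j₀) t)) * H s t := by
    intro x
    have hH : H (x i₀) (x j₀)
        = ∑ s : Bool, ∑ t : Bool, (δb (x i₀) s * δb (x j₀) t) * H s t := by
      cases hx : x i₀ <;> cases hy : x j₀ <;> simp [δb]
    rw [hH, Finset.mul_sum]
    refine Finset.sum_congr rfl fun s _ => ?_
    rw [Finset.mul_sum]
    exact Finset.sum_congr rfl fun t _ => by ring
  simp_rw [decomp]
  rw [Finset.sum_comm]
  refine Finset.sum_congr rfl fun s _ => ?_
  rw [Finset.sum_comm]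
  refine Finset.sum_congr rfl fun t _ => ?_
  rw [← Finset.sum_mul, core2 r i₀ j₀ h s t]

lemma sum_pi_one {ι : Type*} [Fintype ι] [DecidableEq ι] (r : ℝ) (i₀ : ι)
    (H : Bool → ℝ) :
    ∑ x : ι → Bool, (∏ k, wB r (x k)) * H (x i₀)
      = ∑ s : Bool, wB r s * H s := by
  have decomp : ∀ x : ι → Bool, (∏ k, wB r (x k)) * H (x i₀)
      = ∑ s : Bool, ((∏ k, wB r (x k)) * δb (x i₀) s) * H s := by
    intro x
    have hH : H (x i₀) = ∑ s : Bool, δb (x i₀) s * H s := by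
      cases hx : x i₀ <;> simp [δb]
    rw [hH, Finset.mul_sum]
    exact Finset.sum_congr rfl fun s _ => by ring
  simp_rw [decomp]
  rw [Finset.sum_comm]
  refine Finset.sum_congr rfl fun s _ => ?_
  rw [← Finset.sum_mul, core1 r i₀ s]

lemma expectBU_split (n : ℕ) {C : Type} [Fintype C] [DecidableEq C] (p q : ℝ)
    (f : (C → Bool) → (Fin n → Bool) → ℝ) :
    expectBU n p q f
      = ∑ b : C → Bool, (∏ k, wB p (b k)) *
          ∑ u : Fin n → Bool, (∏ i, wB q (u i)) * f b u := by
  simp only [expectBU, wB, Finset.mul_sum, mul_assoc]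

lemma expectBU_sum (n : ℕ) {C : Type} [Fintype C] [DecidableEq C] (p q : ℝ)
    {κ : Type*} (s : Finset κ) (f : κ → (C → Bool) → (Fin n → Bool) → ℝ) :
    expectBU n p q (fun b u => ∑ x ∈ s, f x b u)
      = ∑ x ∈ s, expectBU n p q (f x) := by
  simp only [expectBU, Finset.mul_sum]
  rw [Finset.sum_congr rfl fun b _ => Finset.sum_comm]
  exact Finset.sum_comm

lemma expectBU_const_mul (n : ℕ) {C : Type} [Fintype C] [DecidableEq C] (p q : ℝ)
    (r : ℝ) (f : (C → Bool) → (Fin n → Bool) → ℝ) :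
    expectBU n p q (fun b u => r * f b u) = r * expectBU n p q f := by
  simp only [expectBU, Finset.mul_sum]
  refine Finset.sum_congr rfl fun b _ => Finset.sum_congr rfl fun u _ => by ring

lemma expect_pair_diag (n : ℕ) {C : Type} [Fintype C] [DecidableEq C] (p q : ℝ)
    (k₀ : C) (i j : Fin n) (hij : i ≠ j)
    (f : (C → Bool) → (Fin n → Bool) → ℝ) (F : Bool → Bool → Bool → ℝ)
    (hf : ∀ b u, f b u = F (b k₀) (u i) (u j)) :
    expectBU n p q f
      = ∑ t₀ : Bool, ∑ t₁ : Bool, wB q t₀ * wB q t₁ *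
          ∑ s : Bool, wB p s * F s t₀ t₁ := by
  rw [expectBU_split]
  have inner : ∀ b : C → Bool,
      ∑ u : Fin n → Bool, (∏ i', wB q (u i')) * f b u
        = ∑ t₀ : Bool, ∑ t₁ : Bool, wB q t₀ * wB q t₁ * F (b k₀) t₀ t₁ := by
    intro b
    simp_rw [hf b]
    exact sum_pi_two q i j hij _
  calc ∑ b : C → Bool, (∏ k, wB p (b k)) *
          ∑ u : Fin n → Bool, (∏ i', wB q (u i')) * f b u
      = ∑ b : C → Bool, ∑ t₀ : Bool, ∑ t₁ : Bool,
          (∏ k, wB p (b k)) * (wB q t₀ * wB q t₁ * F (b k₀) t₀ t₁) := by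
        refine Finset.sum_congr rfl fun b _ => ?_
        rw [inner b, Finset.mul_sum]
        refine Finset.sum_congr rfl fun t₀ _ => Finset.mul_sum _ _ _
    _ = ∑ t₀ : Bool, ∑ t₁ : Bool, ∑ b : C → Bool,
          (∏ k, wB p (b k)) * (wB q t₀ * wB q t₁ * F (b k₀) t₀ t₁) := by
        rw [Finset.sum_comm]
        exact Finset.sum_congr rfl fun t₀ _ => Finset.sum_comm
    _ = ∑ t₀ : Bool, ∑ t₁ : Bool, wB q t₀ * wB q t₁ *
          ∑ s : Bool, wB p s * F s t₀ t₁ := by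
        refine Finset.sum_congr rfl fun t₀ _ => Finset.sum_congr rfl fun t₁ _ => ?_
        have h1 : ∑ b : C → Bool,
            (∏ k, wB p (b k)) * (wB q t₀ * wB q t₁ * F (b k₀) t₀ t₁)
            = wB q t₀ * wB q t₁ *
                ∑ b : C → Bool, (∏ k, wB p (b k)) * F (b k₀) t₀ t₁ := by
          rw [Finset.mul_sum]
          exact Finset.sum_congr rfl fun b _ => by ring
        rw [h1, sum_pi_one p k₀ (fun s => F s t₀ t₁)]

lemma expect_pair (n : ℕ) {C : Type} [Fintype C] [DecidableEq C] (p q : ℝ)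
    (k₀ k₁ : C) (hk : k₀ ≠ k₁) (i j : Fin n) (hij : i ≠ j)
    (f : (C → Bool) → (Fin n → Bool) → ℝ) (F : Bool → Bool → Bool → Bool → ℝ)
    (hf : ∀ b u, f b u = F (b k₀) (b k₁) (u i) (u j)) :
    expectBU n p q f
      = ∑ t₀ : Bool, ∑ t₁ : Bool, wB q t₀ * wB q t₁ *
          ∑ s₀ : Bool, ∑ s₁ : Bool, wB p s₀ * wB p s₁ * F s₀ s₁ t₀ t₁ := by
  rw [expectBU_split]
  have inner : ∀ b : C → Bool,
      ∑ u : Fin n → Bool, (∏ i', wB q (u i')) * f b u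
        = ∑ t₀ : Bool, ∑ t₁ : Bool, wB q t₀ * wB q t₁ * F (b k₀) (b k₁) t₀ t₁ := by
    intro b
    simp_rw [hf b]
    exact sum_pi_two q i j hij _
  calc ∑ b : C → Bool, (∏ k, wB p (b k)) *
          ∑ u : Fin n → Bool, (∏ i', wB q (u i')) * f b u
      = ∑ b : C → Bool, ∑ t₀ : Bool, ∑ t₁ : Bool,
          (∏ k, wB p (b k)) * (wB q t₀ * wB q t₁ * F (b k₀) (b k₁) t₀ t₁) := by
        refine Finset.sum_congr rfl fun b _ => ?_
        rw [inner b, Finset.mul_sum]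
        refine Finset.sum_congr rfl fun t₀ _ => Finset.mul_sum _ _ _
    _ = ∑ t₀ : Bool, ∑ t₁ : Bool, ∑ b : C → Bool,
          (∏ k, wB p (b k)) * (wB q t₀ * wB q t₁ * F (b k₀) (b k₁) t₀ t₁) := by
        rw [Finset.sum_comm]
        exact Finset.sum_congr rfl fun t₀ _ => Finset.sum_comm
    _ = ∑ t₀ : Bool, ∑ t₁ : Bool, wB q t₀ * wB q t₁ *
          ∑ s₀ : Bool, ∑ s₁ : Bool, wB p s₀ * wB p s₁ * F s₀ s₁ t₀ t₁ := by
        refine Finset.sum_congr rfl fun t₀ _ => Finset.sum_congr rfl fun t₁ _ => ?_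
        have h1 : ∑ b : C → Bool,
            (∏ k, wB p (b k)) * (wB q t₀ * wB q t₁ * F (b k₀) (b k₁) t₀ t₁)
            = wB q t₀ * wB q t₁ *
                ∑ b : C → Bool, (∏ k, wB p (b k)) * F (b k₀) (b k₁) t₀ t₁ := by
          rw [Finset.mul_sum]
          exact Finset.sum_congr rfl fun b _ => by ring
        rw [h1, sum_pi_two p k₀ k₁ hk (fun s₀ s₁ => F s₀ s₁ t₀ t₁)]

lemma pair_expect (n : ℕ) (α β γ ζ : Fin n → Fin n → ℝ)
    {C : Type} [Fintype C] [DecidableEq C] (c : Fin n → C)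
    (p q : ℝ) (hp0 : 0 < p) (hq0 : 0 < q) (hq1 : q < 1)
    (i j : Fin n) (hij : j ≠ i) :
    expectBU n p q (fun b u =>
      ind (b (c i)) * treatBU c b u i * zDyad α β γ ζ (treatBU c b u) j i / (p * q) -
        ind (b (c i)) * (1 - treatBU c b u i) * zDyad α β γ ζ (treatBU c b u) j i /
          (p * (1 - q)))
      = γ j i + (if c j = c i then q else p * q) * ζ j i := by
  have hp : p ≠ 0 := ne_of_gt hp0
  have hq : q ≠ 0 := ne_of_gt hq0
  have h1q : (1 : ℝ) - q ≠ 0 := ne_of_gt (by linarith)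
  rcases eq_or_ne (c j) (c i) with hc | hc
  · rw [if_pos hc]
    have hf : ∀ (b : C → Bool) (u : Fin n → Bool),
        ind (b (c i)) * treatBU c b u i * zDyad α β γ ζ (treatBU c b u) j i / (p * q) -
          ind (b (c i)) * (1 - treatBU c b u i) * zDyad α β γ ζ (treatBU c b u) j i /
            (p * (1 - q))
        = (fun s t₀ t₁ =>
            ind s * (ind s * ind t₀) *
                (α j i + β j i * (ind s * ind t₁) + γ j i * (ind s * ind t₀) +
                  ζ j i * (ind s * ind t₁) * (ind s * ind t₀)) / (p * q) -
              ind s * (1 - ind s * ind t₀) *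
                (α j i + β j i * (ind s * ind t₁) + γ j i * (ind s * ind t₀) +
                  ζ j i * (ind s * ind t₁) * (ind s * ind t₀)) / (p * (1 - q)))
            (b (c i)) (u i) (u j) := by
      intro b u
      simp only [treatBU, zDyad, hc, ind_and]
    rw [expect_pair_diag n p q (c i) i j (Ne.symm hij) _
      (fun s t₀ t₁ =>
            ind s * (ind s * ind t₀) *
                (α j i + β j i * (ind s * ind t₁) + γ j i * (ind s * ind t₀) +
                  ζ j i * (ind s * ind t₁) * (ind s * ind t₀)) / (p * q) -
              ind s * (1 - ind s * ind t₀) *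
                (α j i + β j i * (ind s * ind t₁) + γ j i * (ind s * ind t₀) +
                  ζ j i * (ind s * ind t₁) * (ind s * ind t₀)) / (p * (1 - q))) hf]
    simp only [Fintype.sum_bool]
    simp only [ind, wB, if_true, if_false, Bool.false_eq_true]
    field_simp
    ring
  · rw [if_neg hc]
    have hf : ∀ (b : C → Bool) (u : Fin n → Bool),
        ind (b (c i)) * treatBU c b u i * zDyad α β γ ζ (treatBU c b u) j i / (p * q) -
          ind (b (c i)) * (1 - treatBU c b u i) * zDyad α β γ ζ (treatBU c b u) j i /
            (p * (1 - q))
        = (fun s₀ s₁ t₀ t₁ =>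
            ind s₀ * (ind s₀ * ind t₀) *
                (α j i + β j i * (ind s₁ * ind t₁) + γ j i * (ind s₀ * ind t₀) +
                  ζ j i * (ind s₁ * ind t₁) * (ind s₀ * ind t₀)) / (p * q) -
              ind s₀ * (1 - ind s₀ * ind t₀) *
                (α j i + β j i * (ind s₁ * ind t₁) + γ j i * (ind s₀ * ind t₀) +
                  ζ j i * (ind s₁ * ind t₁) * (ind s₀ * ind t₀)) / (p * (1 - q)))
            (b (c i)) (b (c j)) (u i) (u j) := by
      intro b u
      simp only [treatBU, zDyad, ind_and]
    rw [expect_pair n p q (c i) (c j) (Ne.symm hc) i j (Ne.symm hij) _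
      (fun s₀ s₁ t₀ t₁ =>
            ind s₀ * (ind s₀ * ind t₀) *
                (α j i + β j i * (ind s₁ * ind t₁) + γ j i * (ind s₀ * ind t₀) +
                  ζ j i * (ind s₁ * ind t₁) * (ind s₀ * ind t₀)) / (p * q) -
              ind s₀ * (1 - ind s₀ * ind t₀) *
                (α j i + β j i * (ind s₁ * ind t₁) + γ j i * (ind s₀ * ind t₀) +
                  ζ j i * (ind s₁ * ind t₁) * (ind s₀ * ind t₀)) / (p * (1 - q))) hf]
    simp only [Fintype.sum_bool]
    simp only [ind, wB, if_true, if_false, Bool.false_eq_true]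
    field_simp
    ring


/-- Proposition 6, edge-level form: Under the two-stage cluster design
with cluster in-experiment probability `p` and treatment probability `q`,
`E[τ̂¹_c(p,q)] = (1/n) Σ_{i ≠ j} (γ_{i,j} + κ_{i,j} ζ_{i,j})`, where `κ_{i,j} = q` if
`i` and `j` are in the same cluster and `κ_{i,j} = pq` otherwise. -/
theorem expect_tauHat1Clu
    (n : ℕ) (hn : 1 ≤ n) (α β γ ζ : Fin n → Fin n → ℝ)
    (C : Type) [Fintype C] [DecidableEq C] (c : Fin n → C)
    (p q : ℝ) (hp0 : 0 < p) (hp1 : p ≤ 1) (hq0 : 0 < q) (hq1 : q < 1) :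
    expectBU n p q (tauHat1Clu α β γ ζ c p q) =
      (1 / (n : ℝ)) * ∑ j, ∑ i ∈ ({j}ᶜ : Finset (Fin n)),
        (γ i j + (if c i = c j then q else p * q) * ζ i j) := by
  have hrw : tauHat1Clu α β γ ζ c p q = fun b u => (1 / (n : ℝ)) *
      ∑ i, ∑ j ∈ ({i}ᶜ : Finset (Fin n)),
        (ind (b (c i)) * treatBU c b u i * zDyad α β γ ζ (treatBU c b u) j i / (p * q) -
          ind (b (c i)) * (1 - treatBU c b u i) * zDyad α β γ ζ (treatBU c b u) j i /
            (p * (1 - q))) := by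
    funext b u
    unfold tauHat1Clu Yagg
    congr 1
    refine Finset.sum_congr rfl fun i _ => ?_
    rw [Finset.mul_sum, Finset.mul_sum, Finset.sum_div, Finset.sum_div,
      ← Finset.sum_sub_distrib]
  rw [hrw, expectBU_const_mul, expectBU_sum]
  congr 1
  refine Finset.sum_congr rfl fun i _ => ?_
  rw [expectBU_sum]
  refine Finset.sum_congr rfl fun j hj => ?_
  have hji : j ≠ i := by simpa using hj
  exact pair_expect n α β γ ζ c p q hp0 hq0 hq1 i j hji
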